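/- Let f ∈ ℚ[x_1,…,x_d] have maximum total degree D, let x^0,…,x^{d'} ∈ ℤ^d be points such that x^1 − x^0, …, x^{d'} − x^0 are linearly independent, and let k ≥ D·d'. If f is constant on the set S_k = {x^0 + Σ_{i=1}^{d'} (n_i/k)(x^i − x^0) : n_i ∈ {0,…,D}}, then f is constant on the affine hull of {x^0,…,x^{d'}}. -/

import Mathlib

open MvPolynomial in
/-- A multivariate polynomial of total degree at most `D` that vanishes on a
grid with `D+1` distinct values in each coordinate is zero. -/
lemma mv_grid_zero : ∀ (n D : ℕ) (p : MvPolynomial (Fin n) ℚ), p.totalDegree ≤ D →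
    ∀ (pts : ℕ → ℚ), (∀ a, a ≤ D → ∀ b, b ≤ D → pts a = pts b → a = b) →
    (∀ m : Fin n → ℕ, (∀ i, m i ≤ D) → eval (fun i => pts (m i)) p = 0) → p = 0 := by
  intro n
  induction n with
  | zero =>
    intro D p _ pts _ h
    obtain ⟨a, rfl⟩ := C_surjective (Fin 0) p
    have := h (fun _ => 0) (fun i => i.elim0)
    simpa using this
  | succ n ih =>
    intro D p hdeg pts hinj h
    set q := finSuccEquiv ℚ n p with hq
    have hcoeff : ∀ i : ℕ, q.coeff i = 0 := by
      intro i
      by_cases hzero : q.coeff i = 0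
      · exact hzero
      refine ih D (q.coeff i) ?_ pts hinj ?_
      · calc (q.coeff i).totalDegree ≤ (q.coeff i).totalDegree + i := Nat.le_add_right _ _
          _ ≤ p.totalDegree := totalDegree_coeff_finSuccEquiv_add_le p i hzero
          _ ≤ D := hdeg
      · intro m hm
        set s : Fin n → ℚ := fun j => pts (m j) with hs
        set r : Polynomial ℚ := Polynomial.map (eval s) q with hr
        have hr0 : r = 0 := by
          refine Polynomial.eq_zero_of_natDegree_lt_card_of_eval_eq_zero' r
            ((Finset.range (D+1)).image pts) ?_ ?_
          · intro y hy
            obtain ⟨a, ha, rfl⟩ := Finset.mem_image.mp hy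
            have haD : a ≤ D := Nat.lt_succ_iff.mp (Finset.mem_range.mp ha)
            have hcons : (fun i => pts ((Fin.cons a m : Fin (n+1) → ℕ) i))
                = Fin.cons (pts a) s := by
              funext i
              refine Fin.cases ?_ (fun j => ?_) i <;> simp [hs]
            have := h (Fin.cons a m)
              (fun i => Fin.cases haD (fun j => hm j) i)
            rw [hcons] at this
            rw [hr, ← eval_eq_eval_mv_eval' s (pts a) p] at *
            exact this
          · have hcard : ((Finset.range (D+1)).image pts).card = D + 1 := by
              rw [Finset.card_image_of_injOn, Finset.card_range]
              intro a ha b hb hab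
              exact hinj a (Nat.lt_succ_iff.mp (Finset.mem_range.mp ha))
                b (Nat.lt_succ_iff.mp (Finset.mem_range.mp hb)) hab
            rw [hcard]
            calc r.natDegree ≤ q.natDegree := Polynomial.natDegree_map_le
              _ = p.degreeOf 0 := natDegree_finSuccEquiv p
              _ ≤ p.totalDegree := degreeOf_le_totalDegree p 0
              _ ≤ D := hdeg
              _ < D + 1 := Nat.lt_succ_self D
        have : eval s (q.coeff i) = 0 := by
          rw [← coeff_eval_eq_eval_coeff, ← hr, hr0, Polynomial.coeff_zero]
        exact this
    have hq0 : q = 0 := Polynomial.ext fun i => by rw [hcoeff i, Polynomial.coeff_zero]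
    have := (finSuccEquiv ℚ n).injective (hq0.trans (map_zero _).symm)
    simpa using this


open MvPolynomial in
/-- If a polynomial of total degree ≤ `D` is constant on the lattice sample
`S_k = {x^0 + Σ (n_i/k)(x^i − x^0) : n_i ∈ {0,…,D}}` for `k ≥ D·d'`, where the
`x^i − x^0` are linearly independent integer vectors, then it is constant on the
affine hull of `x^0, …, x^{d'}`. -/
theorem constant_on_sample_constant_on_affine_hull
    (d d' D k : ℕ) (hk : D * d' ≤ k) (hkpos : 0 < k)
    (f : MvPolynomial (Fin d) ℚ) (hdeg : f.totalDegree ≤ D)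
    (x : Fin (d' + 1) → Fin d → ℤ)
    (hli : LinearIndependent ℚ
      (fun i : Fin d' => (fun j => (x i.succ j : ℚ) - (x 0 j : ℚ))))
    (c : ℚ)
    (hconst : ∀ n : Fin d' → ℕ, (∀ i, n i ≤ D) →
      eval (fun j => (x 0 j : ℚ) +
        ∑ i, ((n i : ℚ) / k) * ((x i.succ j : ℚ) - (x 0 j : ℚ))) f = c) :
    ∀ p ∈ affineSpan ℚ (Set.range fun i => (fun j => (x i j : ℚ))),
      eval p f = c := by
  classical
  set v : Fin d' → Fin d → ℚ := fun i j => (x i.succ j : ℚ) - (x 0 j : ℚ) with hv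
  set φ : Fin d → MvPolynomial (Fin d') ℚ :=
    fun j => C ((x 0 j : ℚ)) + ∑ i, C (v i j) * X i with hφ
  set g : MvPolynomial (Fin d') ℚ := aeval φ f with hg
  -- evaluation of g
  have hevalφ : ∀ (t : Fin d' → ℚ) (j : Fin d),
      eval t (φ j) = (x 0 j : ℚ) + ∑ i, v i j * t i := by
    intro t j
    simp [hφ]
  have hevalg : ∀ t : Fin d' → ℚ,
      eval t g = eval (fun j => (x 0 j : ℚ) + ∑ i, v i j * t i) f := by
    intro t
    rw [hg, aeval_def, MvPolynomial.eval₂_comp_left (eval t)]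
    congr 1
    · ext a
      simp
    · funext j
      simpa using hevalφ t j
  -- degree of g
  have hφdeg : ∀ j, (φ j).totalDegree ≤ 1 := by
    intro j
    refine le_trans (totalDegree_add _ _) (max_le (by rw [totalDegree_C]; exact Nat.zero_le 1) ?_)
    refine le_trans (totalDegree_finset_sum _ _) (Finset.sup_le fun i _ => ?_)
    refine le_trans (totalDegree_mul _ _) ?_
    simp [totalDegree_C, totalDegree_X]
  have hgdeg : g.totalDegree ≤ D := by
    rw [hg]
    conv_lhs => rw [f.as_sum, map_sum]
    refine le_trans (totalDegree_finset_sum _ _) (Finset.sup_le fun m hm => ?_)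
    rw [aeval_monomial]
    refine le_trans (totalDegree_mul _ _) ?_
    have h1 : ((algebraMap ℚ (MvPolynomial (Fin d') ℚ)) (coeff m f)).totalDegree = 0 :=
      totalDegree_C _
    rw [h1, zero_add]
    refine le_trans ?_ (le_trans (le_totalDegree hm) hdeg)
    rw [Finsupp.prod]
    refine le_trans (totalDegree_finset_prod _ _) ?_
    calc ∑ j ∈ m.support, ((φ j) ^ (m j)).totalDegree
        ≤ ∑ j ∈ m.support, m j * 1 := Finset.sum_le_sum fun j _ =>
          le_trans (totalDegree_pow _ _) (Nat.mul_le_mul_left _ (hφdeg j))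
      _ = m.sum fun _ e => e := by simp [Finsupp.sum]
  -- g is constantly c, by the grid lemma
  have hgc : g = C c := by
    have hsubdeg : (g - C c).totalDegree ≤ D := by
      rw [sub_eq_add_neg, ← map_neg C]
      refine le_trans (totalDegree_add _ _) (max_le hgdeg ?_)
      rw [totalDegree_C]
      exact Nat.zero_le D
    have hz : g - C c = 0 := by
      refine mv_grid_zero d' D (g - C c) hsubdeg
        (fun m => (m : ℚ) / k) ?_ ?_
      · intro a _ b _ hab
        have hk0 : (k : ℚ) ≠ 0 := Nat.cast_ne_zero.mpr hkpos.ne'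
        field_simp at hab
        exact_mod_cast hab
      · intro m hm
        have harg : (fun j => (x 0 j : ℚ) + ∑ i, v i j * ((m i : ℚ) / k))
            = fun j => (x 0 j : ℚ) + ∑ i, ((m i : ℚ) / k) * ((x i.succ j : ℚ) - (x 0 j : ℚ)) := by
          funext j
          congr 1
          exact Finset.sum_congr rfl fun i _ => by rw [hv]; ring
        rw [map_sub, eval_C, hevalg, harg, hconst m hm, sub_self]
    have := sub_eq_zero.mp hz
    exact this
  -- points of the affine hull
  intro p hp
  obtain ⟨s, w, hw, rfl⟩ := eq_affineCombination_of_mem_affineSpan hp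
  set t : Fin d' → ℚ := fun i => if i.succ ∈ s then w i.succ else 0 with ht
  have hcomb : (s.affineCombination ℚ (fun i => (fun j => (x i j : ℚ))) w : Fin d → ℚ)
      = fun j => (x 0 j : ℚ) + ∑ i, v i j * t i := by
    rw [Finset.affineCombination_eq_weightedVSubOfPoint_vadd_of_sum_eq_one s w _ hw
      (fun j => (x 0 j : ℚ))]
    funext j
    simp only [Finset.weightedVSubOfPoint_apply, vadd_eq_add, Pi.add_apply, Finset.sum_apply,
      Pi.smul_apply, vsub_eq_sub, Pi.sub_apply, smul_eq_mul]
    rw [add_comm]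
    congr 1
    have hext : ∑ i ∈ s, w i * ((x i j : ℚ) - (x 0 j : ℚ))
        = ∑ i : Fin (d' + 1), (if i ∈ s then w i * ((x i j : ℚ) - (x 0 j : ℚ)) else 0) := by
      rw [Finset.sum_ite_mem, Finset.univ_inter]
    rw [hext, Fin.sum_univ_succ]
    simp only [sub_self, mul_zero, ite_self, zero_add]
    refine Finset.sum_congr rfl fun i _ => ?_
    by_cases hi : i.succ ∈ s <;> simp [ht, hi, mul_comm, hv]
  rw [hcomb, ← hevalg, hgc, eval_C]
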